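/- Let ψ, φ₁, φ₂ ∈ Homeo₊(ℝ) and let I ⊆ ℝ be an interval. If ψ is a weak conjugation from φ₁ to φ₂ that is strong on I, then there exists ψ̄ ∈ Homeo₊(ℝ) with ψ̄ ∘ φ₁ = φ₂ ∘ ψ̄, such that ψ̄(x) = ψ(x) for every x ∈ I, ψ̄(x) = ψ(x) for every x ∈ Fix(φ₁), and moreover ψ̄ agrees with ψ on I ∪ φ₁(I). -/

import Mathlib

/-- The set of fixed points of an orientation preserving homeomorphism of the line. -/
def FixedPts (φ : ℝ ≃o ℝ) : Set ℝ := {x | φ x = x}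

/-- The set of points moved to the right. -/
def IncPts (φ : ℝ ≃o ℝ) : Set ℝ := {x | x < φ x}


namespace PromotionAux
open Set

/-- no fixed point of `g` between `x` and `y` -/
def Rel (g : ℝ ≃o ℝ) (x y : ℝ) : Prop := ∀ z ∈ Set.uIcc x y, g z ≠ z

lemma Rel.symm {g : ℝ ≃o ℝ} {x y : ℝ} (h : Rel g x y) : Rel g y x :=
  fun z hz => h z (by rwa [Set.uIcc_comm])

lemma rel_self {g : ℝ ≃o ℝ} {x : ℝ} (hx : g x ≠ x) : Rel g x x := by
  intro z hz
  simp only [Set.uIcc_self, Set.mem_singleton_iff] at hz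
  subst hz; exact hx

lemma Rel.left {g : ℝ ≃o ℝ} {x y : ℝ} (h : Rel g x y) : g x ≠ x := h x Set.left_mem_uIcc
lemma Rel.right {g : ℝ ≃o ℝ} {x y : ℝ} (h : Rel g x y) : g y ≠ y := h y Set.right_mem_uIcc

lemma Rel.trans {g : ℝ ≃o ℝ} {x y z : ℝ} (h1 : Rel g x y) (h2 : Rel g y z) : Rel g x z := by
  intro w hw
  rcases Set.uIcc_subset_uIcc_union_uIcc (b := y) hw with h | h
  · exact h1 w h
  · exact h2 w h

lemma rel_of_mem_uIcc {g : ℝ ≃o ℝ} {p a b z : ℝ} (ha : Rel g p a) (hb : Rel g p b)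
    (hz : z ∈ Set.uIcc a b) : Rel g p z := by
  have hab : ∀ w ∈ Set.uIcc a b, g w ≠ w := by
    intro w hw
    rcases Set.uIcc_subset_uIcc_union_uIcc (b := p) hw with h | h
    · exact (ha.symm) w h
    · exact hb w h
  intro w hw
  rcases Set.uIcc_subset_uIcc_union_uIcc (b := a) hw with h | h
  · exact ha w h
  · exact hab w (Set.uIcc_subset_uIcc Set.left_mem_uIcc hz h)

lemma rel_sign {g : ℝ ≃o ℝ} {x y : ℝ} (h : Rel g x y) (hx : x < g x) : y < g y := by
  by_contra hy
  push_neg at hy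
  have hy' : g y < y := lt_of_le_of_ne hy h.right
  have hc : Continuous fun t => g t - t := g.continuous.sub continuous_id
  have h0 : (0:ℝ) ∈ Set.uIcc ((fun t => g t - t) x) ((fun t => g t - t) y) := by
    rw [Set.mem_uIcc]; right
    constructor <;> simp <;> linarith
  obtain ⟨z, hz, hz0⟩ := intermediate_value_uIcc hc.continuousOn h0
  exact h z hz (by simpa [sub_eq_zero] using hz0)

lemma rel_apply {g : ℝ ≃o ℝ} {x : ℝ} (hx : g x ≠ x) : Rel g x (g x) := by
  intro z hz hgz
  rcases hx.lt_or_gt with h | h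
  · -- g x < x
    rw [Set.mem_uIcc] at hz
    have hz' : g x ≤ z ∧ z ≤ x := by rcases hz with h' | h' <;> constructor <;> linarith [h'.1, h'.2]
    rcases eq_or_lt_of_le hz'.2 with he | hlt
    · exact hx (he ▸ hgz)
    · have := g.strictMono hlt
      rw [hgz] at this
      exact absurd hz'.1 (not_le.2 this)
  · rw [Set.mem_uIcc] at hz
    have hz' : x ≤ z ∧ z ≤ g x := by rcases hz with h' | h' <;> constructor <;> linarith [h'.1, h'.2]
    rcases eq_or_lt_of_le hz'.1 with he | hlt
    · exact hx (by rw [he]; exact hgz)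
    · have := g.strictMono hlt
      rw [hgz] at this
      exact absurd hz'.2 (not_le.2 this)

lemma rel_symm_apply {g : ℝ ≃o ℝ} {x : ℝ} (hx : g x ≠ x) : Rel g x (g.symm x) := by
  have h1 : g (g.symm x) ≠ g.symm x := by
    intro he
    apply hx
    conv_lhs => rw [← g.apply_symm_apply x]
    rw [he, g.apply_symm_apply]
  have := (rel_apply h1).symm
  rwa [g.apply_symm_apply] at this

lemma zpow_apply_add (f : ℝ ≃o ℝ) (a b : ℤ) (x : ℝ) : (f^(a+b)) x = (f^a) ((f^b) x) := by
  rw [zpow_add]; rfl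

lemma zpow_one_apply (f : ℝ ≃o ℝ) (x : ℝ) : (f^(1:ℤ)) x = f x := by rw [zpow_one]

lemma zpow_zero_apply (f : ℝ ≃o ℝ) (x : ℝ) : (f^(0:ℤ)) x = x := by rw [zpow_zero]; rfl

lemma zpow_succ_apply (f : ℝ ≃o ℝ) (k : ℤ) (x : ℝ) : (f^(k+1)) x = f ((f^k) x) := by
  rw [add_comm, zpow_apply_add, zpow_one]

lemma zpow_neg_apply (f : ℝ ≃o ℝ) (k : ℤ) (x : ℝ) : (f^(-k)) ((f^k) x) = x := by
  rw [← zpow_apply_add]; simp [zpow_zero_apply]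

lemma rel_zpow {g : ℝ ≃o ℝ} {x : ℝ} (hx : g x ≠ x) : ∀ k : ℤ, Rel g x ((g^k) x) := by
  intro k
  induction k using Int.induction_on with
  | zero => simpa [zpow_zero_apply] using rel_self hx
  | succ k ih =>
    have hne : g ((g^(k:ℤ)) x) ≠ (g^(k:ℤ)) x := ih.right
    have := ih.trans (rel_apply hne)
    rwa [← zpow_succ_apply] at this
  | pred k ih =>
    have hne : g ((g^(-k:ℤ)) x) ≠ (g^(-k:ℤ)) x := ih.right
    have := ih.trans (rel_symm_apply hne)
    have he : g.symm ((g^(-k:ℤ)) x) = (g^(-k-1:ℤ)) x := by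
      apply g.injective
      rw [g.apply_symm_apply, ← zpow_succ_apply]
      norm_num
    rwa [he] at this

lemma rel_congr {g h : ℝ ≃o ℝ} (hfix : {x : ℝ | g x = x} = {x | h x = x}) (x y : ℝ) :
    Rel g x y ↔ Rel h x y := by
  have : ∀ z : ℝ, g z = z ↔ h z = z := fun z => Set.ext_iff.mp hfix z
  constructor <;> intro H z hz <;> intro he
  · exact H z hz ((this z).mpr he)
  · exact H z hz ((this z).mp he)


open Filter


lemma fixed_of_sup (g : ℝ ≃o ℝ) (w : ℕ → ℝ) (hm : Monotone w) (hb : BddAbove (Set.range w))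
    (hw : ∀ n, w (n+1) = g (w n)) : g (⨆ n, w n) = ⨆ n, w n := by
  have h1 : Tendsto w atTop (nhds (⨆ n, w n)) := tendsto_atTop_ciSup hm hb
  have h2 : Tendsto (fun n => w (n+1)) atTop (nhds (⨆ n, w n)) :=
    h1.comp (tendsto_add_atTop_nat 1)
  have h3 : Tendsto (fun n => g (w n)) atTop (nhds (g (⨆ n, w n))) :=
    ((g.continuous.tendsto _).comp h1)
  have : Tendsto (fun n => g (w n)) atTop (nhds (⨆ n, w n)) := by
    simpa [hw] using h2
  exact tendsto_nhds_unique h3 this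

lemma fixed_of_inf (g : ℝ ≃o ℝ) (w : ℕ → ℝ) (hm : Antitone w) (hb : BddBelow (Set.range w))
    (hw : ∀ n, w (n+1) = g (w n)) : g (⨅ n, w n) = ⨅ n, w n := by
  have h1 : Tendsto w atTop (nhds (⨅ n, w n)) := tendsto_atTop_ciInf hm hb
  have h2 : Tendsto (fun n => w (n+1)) atTop (nhds (⨅ n, w n)) :=
    h1.comp (tendsto_add_atTop_nat 1)
  have h3 : Tendsto (fun n => g (w n)) atTop (nhds (g (⨅ n, w n))) :=
    ((g.continuous.tendsto _).comp h1)
  have : Tendsto (fun n => g (w n)) atTop (nhds (⨅ n, w n)) := by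
    simpa [hw] using h2
  exact tendsto_nhds_unique h3 this



lemma orbit_strictMono {g : ℝ ≃o ℝ} {p : ℝ} (hpinc : p < g p) :
    StrictMono (fun k : ℤ => (g^k) p) := by
  apply strictMono_int_of_lt_succ
  intro k
  have e : (g^(k+1)) p = (g^k) (g p) := by rw [zpow_apply_add, zpow_one]
  simpa [e] using (g^k).strictMono hpinc

lemma exists_block (g : ℝ ≃o ℝ) (p x : ℝ) (hpinc : p < g p) (hrel : Rel g p x) :
    ∃ n : ℤ, (g^n) p ≤ x ∧ x < (g^(n+1)) p := by
  set u : ℤ → ℝ := fun k => (g^k) p with hu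
  have hmono : StrictMono u := orbit_strictMono hpinc
  have hu0 : u 0 = p := zpow_zero_apply g p
  have hex_le : ∃ k : ℤ, u k ≤ x := by
    by_contra hc
    push_neg at hc
    set w : ℕ → ℝ := fun n => u (-(n:ℤ)) with hwdef
    have hwa : Antitone w := fun m n h =>
      hmono.monotone (by exact_mod_cast neg_le_neg (Int.ofNat_le.2 h))
    have hbb : BddBelow (Set.range w) := ⟨x, by rintro _ ⟨n, rfl⟩; exact (hc _).le⟩
    have hstep : ∀ k : ℤ, u (k+1) = g (u k) := fun k => zpow_succ_apply g k p
    have hw1 : ∀ n : ℕ, w (n+1) = g.symm (w n) := by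
      intro n
      apply g.injective
      rw [g.apply_symm_apply]
      show g (u (-(↑(n+1):ℤ))) = u (-(n:ℤ))
      rw [← hstep]
      congr 1
      push_cast
      ring
    have hfixc : g.symm (⨅ n, w n) = ⨅ n, w n := fixed_of_inf g.symm w hwa hbb hw1
    set c := ⨅ n, w n with hc'
    have hgc : g c = c := by
      conv_lhs => rw [← hfixc]
      rw [g.apply_symm_apply]
    have hcx : x ≤ c := le_ciInf fun n => (hc _).le
    have hcp : c ≤ p := by
      have := ciInf_le hbb 0
      simpa [hwdef, hu0] using this
    exact hrel c (by rw [Set.mem_uIcc]; right; exact ⟨hcx, hcp⟩) hgc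
  have hex_gt : ∃ k : ℤ, x < u k := by
    by_contra hc
    push_neg at hc
    set w : ℕ → ℝ := fun n => u (n:ℤ) with hwdef
    have hwm : Monotone w := fun m n h => hmono.monotone (by exact_mod_cast h)
    have hba : BddAbove (Set.range w) := ⟨x, by rintro _ ⟨n, rfl⟩; exact hc _⟩
    have hstep : ∀ k : ℤ, u (k+1) = g (u k) := fun k => zpow_succ_apply g k p
    have hw1 : ∀ n : ℕ, w (n+1) = g (w n) := by
      intro n
      show u (↑(n+1):ℤ) = g (u (n:ℤ))
      rw [← hstep]
      congr 1
    have hfixc : g (⨆ n, w n) = ⨆ n, w n := fixed_of_sup g w hwm hba hw1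
    set c := ⨆ n, w n with hc'
    have hpc : p ≤ c := by
      have := le_ciSup hba 0
      simpa [hwdef, hu0] using this
    have hcx : c ≤ x := ciSup_le fun n => hc _
    exact hrel c (by rw [Set.mem_uIcc]; left; exact ⟨hpc, hcx⟩) hfixc
  obtain ⟨K, hK⟩ := hex_gt
  obtain ⟨n, hn1, hn2⟩ := Int.exists_greatest_of_bdd
    ⟨K, fun k hk => ((hmono.lt_iff_lt).mp (lt_of_le_of_lt hk hK)).le⟩ hex_le
  refine ⟨n, hn1, ?_⟩
  by_contra hcon
  push_neg at hcon
  have := hn2 _ hcon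
  omega


lemma orbit_eq (g h : ℝ ≃o ℝ) (J : Set ℝ) (heq : ∀ x ∈ J, g x = h x) (x : ℝ) :
    ∀ m : ℕ, (∀ k : ℕ, k < m → (g^(k:ℤ)) x ∈ J) → (h^((m:ℕ):ℤ)) x = (g^((m:ℕ):ℤ)) x := by
  intro m
  induction m with
  | zero => intro _; simp [zpow_zero_apply]
  | succ m ih =>
    intro hmem
    have hc : ((m+1:ℕ):ℤ) = (m:ℤ)+1 := by push_cast; ring
    rw [hc, zpow_succ_apply, zpow_succ_apply, ih (fun k hk => hmem k (by omega)),
        heq _ (hmem m (by omega))]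

lemma orbit_le {g : ℝ ≃o ℝ} {p : ℝ} (hpinc : p < g p) {w : ℝ} (hw : Rel g p w) :
    ∀ {a b : ℤ}, a ≤ b → (g^a) w ≤ (g^b) w := by
  have hsm : StrictMono (fun k : ℤ => (g^k) w) := by
    apply strictMono_int_of_lt_succ
    intro k
    have hrelk : Rel g p ((g^k) w) := hw.trans (rel_zpow hw.right k)
    show (g^k) w < (g^(k+1)) w
    rw [zpow_succ_apply]
    exact rel_sign hrelk hpinc
  intro a b hab
  exact hsm.monotone hab

lemma gap_inc (g h : ℝ ≃o ℝ) (J : Set ℝ) (hJ : Set.OrdConnected J)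
    (hfix : {x : ℝ | g x = x} = {x : ℝ | h x = x})
    (hinc : {x : ℝ | x < g x} = {x : ℝ | x < h x})
    (heq : ∀ x ∈ J, g x = h x) (p : ℝ) (hpinc : p < g p)
    (hpJ : ∀ y, Rel g p y → y ∈ J → p ∈ J) :
    ∃ θ : ℝ → ℝ,
      (∀ x y, Rel g p x → Rel g p y → x < y → θ x < θ y) ∧
      (∀ x, Rel g p x → Rel g p (θ x)) ∧
      (∀ y, Rel g p y → ∃ x, Rel g p x ∧ θ x = y) ∧
      (∀ x, Rel g p x → θ (g x) = h (θ x)) ∧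
      (∀ x, Rel g p x → x ∈ J → θ x = x) := by
  classical
  have hph : p < h p := by
    have h1 : p ∈ {x : ℝ | x < g x} := hpinc
    rw [hinc] at h1
    exact h1
  have hgne : g p - p ≠ 0 := sub_ne_zero.2 hpinc.ne'
  have hhne : h p - p ≠ 0 := sub_ne_zero.2 hph.ne'
  set r : ℝ := (h p - p) / (g p - p) with hrdef
  have hr0 : 0 < r := div_pos (by linarith) (by linarith)
  have hrne : r ≠ 0 := ne_of_gt hr0
  set t : ℝ → ℝ := fun y => p + (y - p) * r with htdef
  set t' : ℝ → ℝ := fun z => p + (z - p) / r with ht'def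
  have htp : t p = p := by simp [htdef]
  have htgp : t (g p) = h p := by
    simp only [htdef, hrdef]
    field_simp
    ring
  have ht'hp : t' (h p) = g p := by
    simp only [ht'def, hrdef]
    field_simp
    ring
  have htt' : ∀ z, t (t' z) = z := by
    intro z
    simp only [htdef, ht'def]
    field_simp
    ring
  have htmono : StrictMono t := by
    intro a b hab
    simp only [htdef]
    have := mul_lt_mul_of_pos_right (sub_lt_sub_right hab p) hr0
    linarith
  have ht'mono : StrictMono t' := by
    intro a b hab
    simp only [ht'def, div_eq_mul_inv]
    have := mul_lt_mul_of_pos_right (sub_lt_sub_right hab p) (inv_pos.2 hr0)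
    linarith
  -- orbits
  have humono : StrictMono (fun k : ℤ => (g^k) p) := orbit_strictMono hpinc
  have hvmono : StrictMono (fun k : ℤ => (h^k) p) := orbit_strictMono hph
  have hrelu : ∀ k : ℤ, Rel g p ((g^k) p) := fun k => rel_zpow hpinc.ne' k
  have hrelv : ∀ k : ℤ, Rel g p ((h^k) p) := fun k =>
    (rel_congr hfix p ((h^k) p)).mpr (rel_zpow hph.ne' k)
  have hsucc_g : ∀ k : ℤ, (g^k) (g p) = (g^(k+1)) p := fun k =>
    by rw [zpow_apply_add g k 1 p, zpow_one]
  have hsucc_h : ∀ k : ℤ, (h^k) (h p) = (h^(k+1)) p := fun k =>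
    by rw [zpow_apply_add h k 1 p, zpow_one]
  have hbex : ∀ x, Rel g p x → ∃ n : ℤ, (g^n) p ≤ x ∧ x < (g^(n+1)) p :=
    fun x hx => exists_block g p x hpinc hx
  have huniq : ∀ (m n : ℤ) (x : ℝ), (g^m) p ≤ x → x < (g^(m+1)) p →
      (g^n) p ≤ x → x < (g^(n+1)) p → m = n := by
    intro m n x h1 h2 h3 h4
    have a1 : m < n + 1 := humono.lt_iff_lt.mp (lt_of_le_of_lt h1 h4)
    have a2 : n < m + 1 := humono.lt_iff_lt.mp (lt_of_le_of_lt h3 h2)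
    omega
  set θ : ℝ → ℝ := fun x =>
    if hx : ∃ n : ℤ, (g^n) p ≤ x ∧ x < (g^(n+1)) p
    then (h^(hx.choose)) (t ((g^(-hx.choose)) x)) else x with hθdef
  have heval : ∀ (n : ℤ) (x : ℝ), (g^n) p ≤ x → x < (g^(n+1)) p →
      θ x = (h^n) (t ((g^(-n)) x)) := by
    intro n x h1 h2
    have hex : ∃ m : ℤ, (g^m) p ≤ x ∧ x < (g^(m+1)) p := ⟨n, h1, h2⟩
    have he : hex.choose = n := huniq _ _ x hex.choose_spec.1 hex.choose_spec.2 h1 h2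
    simp only [hθdef, dif_pos hex]
    rw [he]
  have humemb : ∀ (n : ℤ) (x : ℝ), (g^n) p ≤ x → x < (g^(n+1)) p →
      p ≤ (g^(-n)) x ∧ (g^(-n)) x < g p := by
    intro n x h1 h2
    constructor
    · have h3 := (g^(-n)).monotone h1
      rwa [zpow_neg_apply g n p] at h3
    · have h3 := (g^(-n)).strictMono h2
      have e : (g^(-n)) ((g^(n+1)) p) = g p := by
        rw [← zpow_apply_add, show (-n) + (n+1) = (1:ℤ) by ring, zpow_one]
      rwa [e] at h3
  have htblock : ∀ (n : ℤ) (x : ℝ), (g^n) p ≤ x → x < (g^(n+1)) p →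
      p ≤ t ((g^(-n)) x) ∧ t ((g^(-n)) x) < h p := by
    intro n x h1 h2
    obtain ⟨b1, b2⟩ := humemb n x h1 h2
    constructor
    · calc p = t p := htp.symm
        _ ≤ t ((g^(-n)) x) := htmono.monotone b1
    · calc t ((g^(-n)) x) < t (g p) := htmono b2
        _ = h p := htgp
  have hvblock : ∀ (n : ℤ) (x : ℝ), (g^n) p ≤ x → x < (g^(n+1)) p →
      (h^n) p ≤ θ x ∧ θ x < (h^(n+1)) p := by
    intro n x h1 h2
    obtain ⟨b1, b2⟩ := htblock n x h1 h2
    rw [heval n x h1 h2]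
    constructor
    · exact (h^n).monotone b1
    · have := (h^n).strictMono b2
      rwa [hsucc_h n] at this
  refine ⟨θ, ?_, ?_, ?_, ?_, ?_⟩
  · -- strict mono
    intro x y hx hy hxy
    obtain ⟨n, hn1, hn2⟩ := hbex x hx
    obtain ⟨m, hm1, hm2⟩ := hbex y hy
    have hnm : n ≤ m := by
      by_contra hc
      push_neg at hc
      have : (g^(m+1)) p ≤ (g^n) p := humono.monotone (by omega)
      linarith
    rcases eq_or_lt_of_le hnm with he | hlt
    · subst he
      rw [heval n x hn1 hn2, heval n y hm1 hm2]
      exact (h^n).strictMono (htmono ((g^(-n)).strictMono hxy))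
    · have c1 := (hvblock n x hn1 hn2).2
      have c2 := (hvblock m y hm1 hm2).1
      have c3 : (h^(n+1)) p ≤ (h^m) p := hvmono.monotone (by omega)
      linarith
  · -- into component
    intro x hx
    obtain ⟨n, hn1, hn2⟩ := hbex x hx
    obtain ⟨b1, b2⟩ := hvblock n x hn1 hn2
    exact rel_of_mem_uIcc (hrelv n) (hrelv (n+1))
      (by rw [Set.mem_uIcc]; left; exact ⟨b1, b2.le⟩)
  · -- surjective
    intro y hy
    have hyh : Rel h p y := (rel_congr hfix p y).mp hy
    obtain ⟨m, hm1, hm2⟩ := exists_block h p y hph hyh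
    set z := (h^(-m)) y with hzdef
    have hz1 : p ≤ z := by
      have h3 := (h^(-m)).monotone hm1
      rwa [zpow_neg_apply h m p] at h3
    have hz2 : z < h p := by
      have h3 := (h^(-m)).strictMono hm2
      have e : (h^(-m)) ((h^(m+1)) p) = h p := by
        rw [← zpow_apply_add, show (-m) + (m+1) = (1:ℤ) by ring, zpow_one]
      rwa [e] at h3
    have hx1 : p ≤ t' z := by
      have : t' p ≤ t' z := ht'mono.monotone hz1
      simpa [ht'def] using this
    have hx2 : t' z < g p := by
      calc t' z < t' (h p) := ht'mono hz2
        _ = g p := ht'hp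
    have hux1 : (g^m) p ≤ (g^m) (t' z) := (g^m).monotone hx1
    have hux2 : (g^m) (t' z) < (g^(m+1)) p := by
      have := (g^m).strictMono hx2
      rwa [hsucc_g m] at this
    have hrelx : Rel g p ((g^m) (t' z)) := rel_of_mem_uIcc (hrelu m) (hrelu (m+1))
      (by rw [Set.mem_uIcc]; left; exact ⟨hux1, hux2.le⟩)
    refine ⟨(g^m) (t' z), hrelx, ?_⟩
    rw [heval m _ hux1 hux2, zpow_neg_apply g m (t' z), htt' z, hzdef]
    have e := zpow_neg_apply h (-m) y
    rwa [neg_neg] at e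
  · -- conjugation
    intro x hx
    obtain ⟨n, hn1, hn2⟩ := hbex x hx
    have hg1 : (g^(n+1)) p ≤ g x := by
      rw [zpow_succ_apply]
      exact g.monotone hn1
    have hg2 : g x < (g^(n+1+1)) p := by
      rw [zpow_succ_apply g (n+1)]
      exact g.strictMono hn2
    rw [heval (n+1) (g x) hg1 hg2, heval n x hn1 hn2]
    have e : (g^(-(n+1))) (g x) = (g^(-n)) x := by
      have e1 : (g^(-(n+1))) (g x) = (g^(-(n+1))) ((g^(1:ℤ)) x) := by rw [zpow_one]
      rw [e1, ← zpow_apply_add, show (-(n+1)) + 1 = -n by ring]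
    rw [e, zpow_succ_apply]
  · -- identity on J
    intro x hx hxJ
    have hpJ' : p ∈ J := hpJ x hx hxJ
    have hgh : g p = h p := heq p hpJ'
    have hr1 : r = 1 := by rw [hrdef, ← hgh, div_self hgne]
    have htid : ∀ y, t y = y := by intro y; simp [htdef, hr1]
    obtain ⟨n, hn1, hn2⟩ := hbex x hx
    rw [heval n x hn1 hn2, htid]
    rcases le_or_gt 0 n with hn0 | hn0
    · -- n ≥ 0
      set N := n.toNat with hN
      have hNe : (N:ℤ) = n := Int.toNat_of_nonneg hn0
      set y := (g^(-n)) x with hy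
      have hyx : (g^n) y = x := by
        rw [hy]
        have e := zpow_neg_apply g (-n) x
        rwa [neg_neg] at e
      have hrely : Rel g p y := hx.trans (rel_zpow hx.right (-n))
      have hpy : p ≤ y := (humemb n x hn1 hn2).1
      have hmem : ∀ k : ℕ, k < N → (g^(k:ℤ)) y ∈ J := by
        intro k hk
        have m1 : p ≤ (g^(k:ℤ)) y := by
          have := orbit_le hpinc hrely (show (0:ℤ) ≤ (k:ℤ) from Int.natCast_nonneg k)
          rw [zpow_zero_apply] at this
          linarith
        have m2 : (g^(k:ℤ)) y ≤ x := by
          have := orbit_le hpinc hrely (show (k:ℤ) ≤ (N:ℤ) by exact_mod_cast hk.le)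
          rw [hNe, hyx] at this
          exact this
        exact hJ.out hpJ' hxJ ⟨m1, m2⟩
      have hoq := orbit_eq g h J heq y N hmem
      rw [hNe, hyx] at hoq
      exact hoq
    · -- n < 0
      set M := (-n).toNat with hM
      have hMe : (M:ℤ) = -n := Int.toNat_of_nonneg (by omega)
      have hxp : x < p := by
        have h2 : (g^(n+1)) p ≤ (g^(0:ℤ)) p :=
          orbit_le hpinc (rel_self hpinc.ne') (by omega)
        rw [zpow_zero_apply] at h2
        linarith
      have hmem : ∀ k : ℕ, k < M → (g^(k:ℤ)) x ∈ J := by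
        intro k hk
        have m1 : x ≤ (g^(k:ℤ)) x := by
          have := orbit_le hpinc hx (show (0:ℤ) ≤ (k:ℤ) from Int.natCast_nonneg k)
          rw [zpow_zero_apply] at this
          linarith
        have m2 : (g^(k:ℤ)) x ≤ p := by
          have hkM : (k:ℤ) ≤ (M:ℤ) - 1 := by
            have : (k:ℤ) < (M:ℤ) := by exact_mod_cast hk
            omega
          have l1 : (g^(k:ℤ)) x ≤ (g^((M:ℤ)-1)) x := orbit_le hpinc hx hkM
          have l2 : (g^((M:ℤ))) x < g p := by
            rw [hMe]
            exact (humemb n x hn1 hn2).2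
          have l3 : (g^((M:ℤ)-1)) x < p := by
            have e := zpow_succ_apply g ((M:ℤ)-1) x
            rw [show ((M:ℤ)-1)+1 = (M:ℤ) by ring] at e
            rw [e] at l2
            exact g.strictMono.lt_iff_lt.mp l2
          linarith
        exact hJ.out hxJ hpJ' ⟨m1, m2⟩
      have hoq := orbit_eq g h J heq x M hmem
      rw [hMe] at hoq
      rw [← hoq]
      have e := zpow_neg_apply h (-n) x
      rwa [neg_neg] at e

noncomputable def cneg (g : ℝ ≃o ℝ) : ℝ ≃o ℝ :=
  { toFun := fun x => -(g (-x)),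
    invFun := fun x => -(g.symm (-x)),
    left_inv := fun x => by simp,
    right_inv := fun x => by simp,
    map_rel_iff' := by intro a b; simp }

lemma cneg_apply (g : ℝ ≃o ℝ) (x : ℝ) : cneg g x = -(g (-x)) := rfl

lemma neg_mem_uIcc {x y z : ℝ} (hz : z ∈ Set.uIcc (-x) (-y)) : -z ∈ Set.uIcc x y := by
  rw [Set.mem_uIcc] at hz ⊢
  rcases hz with h | h
  · right; constructor <;> linarith [h.1, h.2]
  · left; constructor <;> linarith [h.1, h.2]

lemma rel_cneg {g : ℝ ≃o ℝ} {x y : ℝ} : Rel (cneg g) x y ↔ Rel g (-x) (-y) := by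
  constructor
  · intro H w hw hgw
    exact H (-w) (neg_mem_uIcc (by simpa using hw)) (by simp [cneg_apply, hgw])
  · intro H z hz he
    rw [cneg_apply] at he
    have hmem : -z ∈ Set.uIcc (-x) (-y) := neg_mem_uIcc (by simpa using hz)
    exact H (-z) hmem (by linarith)

lemma gap_any (g h : ℝ ≃o ℝ) (J : Set ℝ) (hJ : Set.OrdConnected J)
    (hfix : {x : ℝ | g x = x} = {x : ℝ | h x = x})
    (hinc : {x : ℝ | x < g x} = {x : ℝ | x < h x})
    (heq : ∀ x ∈ J, g x = h x) (p : ℝ) (hpne : g p ≠ p)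
    (hpJ : ∀ y, Rel g p y → y ∈ J → p ∈ J) :
    ∃ θ : ℝ → ℝ,
      (∀ x y, Rel g p x → Rel g p y → x < y → θ x < θ y) ∧
      (∀ x, Rel g p x → Rel g p (θ x)) ∧
      (∀ y, Rel g p y → ∃ x, Rel g p x ∧ θ x = y) ∧
      (∀ x, Rel g p x → θ (g x) = h (θ x)) ∧
      (∀ x, Rel g p x → x ∈ J → θ x = x) := by
  rcases hpne.lt_or_gt with hdecp | hincp
  · -- decreasing gap : conjugate by negation
    have hdec : ∀ x : ℝ, g x < x ↔ h x < x := by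
      intro x
      have e1 : g x = x ↔ h x = x := Set.ext_iff.mp hfix x
      have e2 : x < g x ↔ x < h x := Set.ext_iff.mp hinc x
      constructor
      · intro hlt
        rcases lt_trichotomy (h x) x with c | c | c
        · exact c
        · exact absurd (e1.mpr c) (ne_of_lt hlt)
        · exact absurd (e2.mpr c) (not_lt_of_gt hlt)
      · intro hlt
        rcases lt_trichotomy (g x) x with c | c | c
        · exact c
        · exact absurd (e1.mp c) (ne_of_lt hlt)
        · exact absurd (e2.mp c) (not_lt_of_gt hlt)
    have hfix' : {x : ℝ | cneg g x = x} = {x : ℝ | cneg h x = x} := by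
      ext x
      have e1 : g (-x) = -x ↔ h (-x) = -x := Set.ext_iff.mp hfix (-x)
      simp only [Set.mem_setOf_eq, cneg_apply]
      constructor
      · intro h2
        have h3 : g (-x) = -x := by linarith
        have := e1.mp h3
        linarith
      · intro h2
        have h3 : h (-x) = -x := by linarith
        have := e1.mpr h3
        linarith
    have hinc' : {x : ℝ | x < cneg g x} = {x : ℝ | x < cneg h x} := by
      ext x
      have e1 := hdec (-x)
      simp only [Set.mem_setOf_eq, cneg_apply]
      constructor <;> intro hlt
      · have : g (-x) < -x := by linarith
        have := e1.mp this
        linarith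
      · have : h (-x) < -x := by linarith
        have := e1.mpr this
        linarith
    have hJ' : Set.OrdConnected {x : ℝ | -x ∈ J} := by
      constructor
      intro a ha b hb z hz
      have hmz : -z ∈ Set.Icc (-b) (-a) := ⟨neg_le_neg hz.2, neg_le_neg hz.1⟩
      exact hJ.out hb ha hmz
    have heq' : ∀ x ∈ {x : ℝ | -x ∈ J}, cneg g x = cneg h x := by
      intro x hx
      simp only [cneg_apply]
      rw [heq (-x) hx]
    have hpinc' : -p < cneg g (-p) := by
      rw [cneg_apply, neg_neg]
      linarith
    have hrt : ∀ x : ℝ, Rel g p x ↔ Rel (cneg g) (-p) (-x) := by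
      intro x
      rw [rel_cneg, neg_neg, neg_neg]
    have hpJ' : ∀ y, Rel (cneg g) (-p) y → y ∈ {x : ℝ | -x ∈ J} → -p ∈ {x : ℝ | -x ∈ J} := by
      intro y hrel hy
      have h1 : Rel g p (-y) := by
        rw [hrt (-y), neg_neg]
        exact hrel
      have h2 : p ∈ J := hpJ (-y) h1 hy
      simpa using h2
    obtain ⟨θ', m1, m2, m3, m4, m5⟩ := gap_inc (cneg g) (cneg h) {x : ℝ | -x ∈ J} hJ'
      hfix' hinc' heq' (-p) hpinc' hpJ'
    refine ⟨fun x => -(θ' (-x)), ?_, ?_, ?_, ?_, ?_⟩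
    · intro x y hx hy hxy
      have := m1 (-y) (-x) ((hrt y).mp hy) ((hrt x).mp hx) (by linarith)
      show -θ' (-x) < -θ' (-y)
      linarith
    · intro x hx
      have := m2 (-x) ((hrt x).mp hx)
      rw [hrt (-(θ' (-x))), neg_neg]
      exact this
    · intro y hy
      obtain ⟨x', hx', he⟩ := m3 (-y) ((hrt y).mp hy)
      refine ⟨-x', ?_, ?_⟩
      · rw [hrt (-x'), neg_neg]
        exact hx'
      · show -θ' (-(-x')) = y
        rw [neg_neg, he, neg_neg]
    · intro x hx
      have e1 : -(g x) = cneg g (-x) := by rw [cneg_apply, neg_neg]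
      have := m4 (-x) ((hrt x).mp hx)
      show -θ' (-(g x)) = h (-θ' (-x))
      rw [show -(g x) = cneg g (-x) from e1, this, cneg_apply, neg_neg]
    · intro x hx hxJ
      have := m5 (-x) ((hrt x).mp hx) (by simpa using hxJ)
      show -θ' (-x) = x
      rw [this, neg_neg]
  · -- increasing gap
    exact gap_inc g h J hJ hfix hinc heq p hincp hpJ

lemma key (g h : ℝ ≃o ℝ) (J : Set ℝ) (hJ : Set.OrdConnected J)
    (hfix : {x : ℝ | g x = x} = {x : ℝ | h x = x})
    (hinc : {x : ℝ | x < g x} = {x : ℝ | x < h x})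
    (heq : ∀ x ∈ J, g x = h x) :
    ∃ θ : ℝ ≃o ℝ, (∀ x, θ (g x) = h (θ x)) ∧ (∀ x ∈ J, θ x = x) ∧
      (∀ x, g x = x → θ x = x) := by
  classical
  set Q : Set ℝ → ℝ → ℝ := fun C x =>
    if h1 : (C ∩ J).Nonempty then h1.some
    else if h2 : C.Nonempty then h2.some else x with hQdef
  set P : ℝ → ℝ := fun x => Q {y | Rel g x y} x with hPdef
  have hCeq : ∀ x x', Rel g x x' → {y | Rel g x y} = {y | Rel g x' y} := by
    intro x x' hr
    ext y
    exact ⟨fun hy => hr.symm.trans hy, fun hy => hr.trans hy⟩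
  have hQwd : ∀ (C : Set ℝ) (x x' : ℝ), C.Nonempty → Q C x = Q C x' := by
    intro C x x' hC
    by_cases h1 : (C ∩ J).Nonempty
    · simp only [hQdef, dif_pos h1]
    · simp only [hQdef, dif_neg h1, dif_pos hC]
  have hPconst : ∀ x x', Rel g x x' → P x = P x' := by
    intro x x' hr
    show Q {y | Rel g x y} x = Q {y | Rel g x' y} x'
    rw [hCeq x x' hr]
    exact hQwd _ x x' ⟨x', rel_self hr.right⟩
  have hPrel : ∀ x, g x ≠ x → Rel g x (P x) := by
    intro x hx
    show Rel g x (Q {y | Rel g x y} x)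
    by_cases h1 : ({y | Rel g x y} ∩ J).Nonempty
    · simp only [hQdef, dif_pos h1]
      exact h1.some_mem.1
    · have h2 : {y | Rel g x y}.Nonempty := ⟨x, rel_self hx⟩
      simp only [hQdef, dif_neg h1, dif_pos h2]
      exact h2.some_mem
  have hPJ : ∀ x y, Rel g x y → y ∈ J → P x ∈ J := by
    intro x y hr hyJ
    have h1 : ({y' | Rel g x y'} ∩ J).Nonempty := ⟨y, hr, hyJ⟩
    show Q {y' | Rel g x y'} x ∈ J
    simp only [hQdef, dif_pos h1]
    exact h1.some_mem.2
  have hPnF : ∀ x, g x ≠ x → g (P x) ≠ P x := fun x hx => (hPrel x hx).right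
  have hPJ2 : ∀ x, g x ≠ x → ∀ y, Rel g (P x) y → y ∈ J → P x ∈ J := by
    intro x hx y hry hyJ
    exact hPJ x y ((hPrel x hx).trans hry) hyJ
  have main : ∀ q : ℝ, ∃ θ' : ℝ → ℝ, (g q ≠ q → (∀ y, Rel g q y → y ∈ J → q ∈ J) →
      ((∀ x y, Rel g q x → Rel g q y → x < y → θ' x < θ' y) ∧
       (∀ x, Rel g q x → Rel g q (θ' x)) ∧
       (∀ y, Rel g q y → ∃ x, Rel g q x ∧ θ' x = y) ∧
       (∀ x, Rel g q x → θ' (g x) = h (θ' x)) ∧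
       (∀ x, Rel g q x → x ∈ J → θ' x = x))) := by
    intro q
    by_cases h1 : g q = q
    · exact ⟨id, fun hq => absurd h1 hq⟩
    · by_cases h2 : ∀ y, Rel g q y → y ∈ J → q ∈ J
      · obtain ⟨θ', hp1, hp2, hp3, hp4, hp5⟩ := gap_any g h J hJ hfix hinc heq q h1 h2
        exact ⟨θ', fun _ _ => ⟨hp1, hp2, hp3, hp4, hp5⟩⟩
      · exact ⟨id, fun _ hq => absurd hq h2⟩
  choose Θ hΘ using main
  set θ : ℝ → ℝ := fun x => if g x = x then x else Θ (P x) x with hθdef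
  have hevF : ∀ x, g x = x → θ x = x := by
    intro x hx
    simp only [hθdef, if_pos hx]
  have hevN : ∀ x, g x ≠ x → θ x = Θ (P x) x := by
    intro x hx
    simp only [hθdef, if_neg hx]
  -- conjugation
  have hconj : ∀ x, θ (g x) = h (θ x) := by
    intro x
    by_cases hx : g x = x
    · rw [hx, hevF x hx]
      have : h x = x := (Set.ext_iff.mp hfix x).mp hx
      rw [this]
    · obtain ⟨m1, m2, m3, m4, m5⟩ := hΘ (P x) (hPnF x hx) (hPJ2 x hx)
      have hgx : g (g x) ≠ g x := fun he => hx (g.injective he)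
      have hpp : P (g x) = P x := hPconst (g x) x (rel_apply hx).symm
      rw [hevN (g x) hgx, hevN x hx, hpp]
      exact m4 x (hPrel x hx).symm
  -- identity on J
  have hJid : ∀ x ∈ J, θ x = x := by
    intro x hxJ
    by_cases hx : g x = x
    · exact hevF x hx
    · obtain ⟨m1, m2, m3, m4, m5⟩ := hΘ (P x) (hPnF x hx) (hPJ2 x hx)
      rw [hevN x hx]
      exact m5 x (hPrel x hx).symm hxJ
  -- strict monotone
  have hmono : StrictMono θ := by
    intro x y hxy
    by_cases hx : g x = x <;> by_cases hy : g y = y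
    · rw [hevF x hx, hevF y hy]; exact hxy
    · -- x fixed, y moving : x < θ y
      obtain ⟨m1, m2, m3, m4, m5⟩ := hΘ (P y) (hPnF y hy) (hPJ2 y hy)
      rw [hevF x hx, hevN y hy]
      by_contra hc
      push_neg at hc
      have hrw : Rel g (P y) (Θ (P y) y) := m2 y (hPrel y hy).symm
      have hrx : Rel g (P y) x := rel_of_mem_uIcc hrw (hPrel y hy).symm
        (by rw [Set.mem_uIcc]; left; exact ⟨hc, hxy.le⟩)
      exact hrx.right hx
    · -- x moving, y fixed : θ x < y
      obtain ⟨m1, m2, m3, m4, m5⟩ := hΘ (P x) (hPnF x hx) (hPJ2 x hx)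
      rw [hevN x hx, hevF y hy]
      by_contra hc
      push_neg at hc
      have hrw : Rel g (P x) (Θ (P x) x) := m2 x (hPrel x hx).symm
      have hry : Rel g (P x) y := rel_of_mem_uIcc (hPrel x hx).symm hrw
        (by rw [Set.mem_uIcc]; left; exact ⟨hxy.le, hc⟩)
      exact hry.right hy
    · by_cases hrel : Rel g x y
      · obtain ⟨m1, m2, m3, m4, m5⟩ := hΘ (P x) (hPnF x hx) (hPJ2 x hx)
        have hpp : P y = P x := hPconst y x hrel.symm
        rw [hevN x hx, hevN y hy, hpp]
        exact m1 x y (hPrel x hx).symm ((hPrel x hx).symm.trans hrel) hxy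
      · have hzex : ∃ z ∈ Set.uIcc x y, g z = z := by
          by_contra hc
          push_neg at hc
          exact hrel (fun z hz => hc z hz)
        obtain ⟨z, hz, hgz⟩ := hzex
        rw [Set.uIcc_of_le hxy.le] at hz
        have hxz : θ x < z := by
          obtain ⟨m1, m2, m3, m4, m5⟩ := hΘ (P x) (hPnF x hx) (hPJ2 x hx)
          rw [hevN x hx]
          by_contra hc
          push_neg at hc
          have hrw : Rel g (P x) (Θ (P x) x) := m2 x (hPrel x hx).symm
          have : Rel g (P x) z := rel_of_mem_uIcc (hPrel x hx).symm hrw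
            (by rw [Set.mem_uIcc]; left; exact ⟨hz.1, hc⟩)
          exact this.right hgz
        have hzy : z < θ y := by
          obtain ⟨m1, m2, m3, m4, m5⟩ := hΘ (P y) (hPnF y hy) (hPJ2 y hy)
          rw [hevN y hy]
          by_contra hc
          push_neg at hc
          have hrw : Rel g (P y) (Θ (P y) y) := m2 y (hPrel y hy).symm
          have : Rel g (P y) z := rel_of_mem_uIcc hrw (hPrel y hy).symm
            (by rw [Set.mem_uIcc]; left; exact ⟨hc, hz.2⟩)
          exact this.right hgz
        linarith
  -- surjective
  have hsurj : Function.Surjective θ := by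
    intro y
    by_cases hy : g y = y
    · exact ⟨y, hevF y hy⟩
    · obtain ⟨m1, m2, m3, m4, m5⟩ := hΘ (P y) (hPnF y hy) (hPJ2 y hy)
      obtain ⟨x, hxr, hxe⟩ := m3 y (hPrel y hy).symm
      have hx : g x ≠ x := hxr.right
      have hxy : Rel g x y := hxr.symm.trans (hPrel y hy).symm
      have hpp : P x = P y := hPconst x y hxy
      refine ⟨x, ?_⟩
      rw [hevN x hx, hpp, hxe]
  refine ⟨StrictMono.orderIsoOfSurjective θ hmono hsurj, ?_, ?_, ?_⟩
  · intro x
    show θ (g x) = h (θ x)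
    exact hconj x
  · intro x hxJ
    show θ x = x
    exact hJid x hxJ
  · intro x hx
    show θ x = x
    exact hevF x hx

end PromotionAux

/-- Promotion of a weak conjugation that is strong on an interval `I` to a genuine
conjugation agreeing with it on `I ∪ φ₁(I)` and on `Fix φ₁`. -/
theorem promotion (ψ φ₁ φ₂ : ℝ ≃o ℝ) (I : Set ℝ) (hI : I.OrdConnected)
    (hfix : ψ '' FixedPts φ₁ = FixedPts φ₂)
    (hinc : ψ '' IncPts φ₁ = IncPts φ₂)
    (hstrong : ∀ x ∈ I, ψ (φ₁ x) = φ₂ (ψ x)) :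
    ∃ ψb : ℝ ≃o ℝ,
      (∀ x : ℝ, ψb (φ₁ x) = φ₂ (ψb x)) ∧
      (∀ x ∈ I, ψb x = ψ x) ∧
      (∀ x ∈ FixedPts φ₁, ψb x = ψ x) ∧
      (∀ x ∈ I ∪ (fun y => φ₁ y) '' I, ψb x = ψ x) := by
  classical
  set G : ℝ ≃o ℝ := (ψ.symm.trans φ₁).trans ψ with hGdef
  have hGpsi : ∀ x, G (ψ x) = ψ (φ₁ x) := by
    intro x
    show ψ (φ₁ (ψ.symm (ψ x))) = ψ (φ₁ x)
    rw [ψ.symm_apply_apply]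
  have hfixG : {x : ℝ | G x = x} = {x : ℝ | φ₂ x = x} := by
    have : ({x : ℝ | φ₂ x = x} : Set ℝ) = FixedPts φ₂ := rfl
    rw [this, ← hfix]
    ext x
    simp only [Set.mem_setOf_eq]
    constructor
    · intro he
      refine ⟨ψ.symm x, ?_, ψ.apply_symm_apply x⟩
      show φ₁ (ψ.symm x) = ψ.symm x
      apply ψ.injective
      have he' : ψ (φ₁ (ψ.symm x)) = x := he
      rw [he', ψ.apply_symm_apply]
    · rintro ⟨w, hw, rfl⟩
      show ψ (φ₁ (ψ.symm (ψ w))) = ψ w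
      rw [ψ.symm_apply_apply]
      have hw' : φ₁ w = w := hw
      rw [hw']
  have hincG : {x : ℝ | x < G x} = {x : ℝ | x < φ₂ x} := by
    have : ({x : ℝ | x < φ₂ x} : Set ℝ) = IncPts φ₂ := rfl
    rw [this, ← hinc]
    ext x
    simp only [Set.mem_setOf_eq]
    constructor
    · intro hlt
      refine ⟨ψ.symm x, ?_, ψ.apply_symm_apply x⟩
      show ψ.symm x < φ₁ (ψ.symm x)
      have hlt' : ψ (ψ.symm x) < ψ (φ₁ (ψ.symm x)) := by
        rw [ψ.apply_symm_apply]
        exact hlt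
      exact ψ.lt_iff_lt.mp hlt'
    · rintro ⟨w, hw, rfl⟩
      show ψ w < ψ (φ₁ (ψ.symm (ψ w)))
      rw [ψ.symm_apply_apply]
      exact ψ.strictMono hw
  have hJ : Set.OrdConnected (ψ '' I) := by
    constructor
    rintro _ ⟨a, ha, rfl⟩ _ ⟨b, hb, rfl⟩ z hz
    refine ⟨ψ.symm z, ?_, ψ.apply_symm_apply z⟩
    have h1 : a ≤ ψ.symm z := by
      have := hz.1
      rw [← ψ.apply_symm_apply z] at this
      exact ψ.le_iff_le.mp this
    have h2 : ψ.symm z ≤ b := by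
      have := hz.2
      rw [← ψ.apply_symm_apply z] at this
      exact ψ.le_iff_le.mp this
    exact hI.out ha hb ⟨h1, h2⟩
  have heqJ : ∀ x ∈ ψ '' I, G x = φ₂ x := by
    rintro _ ⟨a, ha, rfl⟩
    rw [hGpsi, hstrong a ha]
  obtain ⟨θ, hc, hid, hfixid⟩ := PromotionAux.key G φ₂ (ψ '' I) hJ hfixG hincG heqJ
  have hmemI : ∀ x ∈ I, (ψ.trans θ) x = ψ x := by
    intro x hx
    show θ (ψ x) = ψ x
    exact hid _ ⟨x, hx, rfl⟩
  refine ⟨ψ.trans θ, ?_, hmemI, ?_, ?_⟩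
  · intro x
    show θ (ψ (φ₁ x)) = φ₂ (θ (ψ x))
    rw [← hGpsi x]
    exact hc (ψ x)
  · intro x hx
    show θ (ψ x) = ψ x
    apply hfixid
    rw [hGpsi x]
    have hx' : φ₁ x = x := hx
    rw [hx']
  · intro x hx
    rcases hx with hx | ⟨w, hw, rfl⟩
    · exact hmemI x hx
    · show θ (ψ (φ₁ w)) = ψ (φ₁ w)
      rw [← hGpsi w, hc (ψ w), hid (ψ w) ⟨w, hw, rfl⟩, hGpsi w, hstrong w hw]
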